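/- For every integer p ≥ 3 and every β > β_0 > β*(p), sup_{x ∈ η_p^{−1}((β,∞))} H_{β_0,p}(x) = max{ sup_{x ∈ (m_*(β,p), 1]} H_{β_0,p}(x), 0 }, where η_p^{−1}((β,∞)) = {t ∈ [−1,1] : η_p(t) > β}. -/

import Mathlib

open Real Set Filter

/-- `I(x) = ½[(1+x)log(1+x) + (1−x)log(1−x)]` (with `Real.log 0 = 0`). -/
noncomputable def bahI (x : ℝ) : ℝ :=
  ((1 + x) * Real.log (1 + x) + (1 - x) * Real.log (1 - x)) / 2

/-- `H_{β,p}(x) = β xᵖ − I(x)`. -/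
noncomputable def bahH (β : ℝ) (p : ℕ) (x : ℝ) : ℝ := β * x ^ p - bahI x

/-- `β*(p) = sup {β ≥ 0 : sup_{x∈[−1,1]} H_{β,p}(x) = 0}`. -/
noncomputable def betaStar (p : ℕ) : ℝ :=
  sSup {β : ℝ | 0 ≤ β ∧ sSup (bahH β p '' Set.Icc (-1 : ℝ) 1) = 0}

/-- inverse hyperbolic tangent. -/
noncomputable def arctanh (x : ℝ) : ℝ := Real.log ((1 + x) / (1 - x)) / 2

/-- `η_p(t) = p⁻¹ t^{1−p} arctanh t` for `t ≠ 0`, and `η_p(0) = 0`. -/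
noncomputable def etaFn (p : ℕ) (t : ℝ) : ℝ :=
  if t = 0 then 0 else (p : ℝ)⁻¹ * t ^ (1 - (p : ℤ)) * arctanh t

open Topology

/-! ### auxiliary lemmas -/

lemma arctanh_zero' : arctanh 0 = 0 := by simp [arctanh]

lemma arctanh_one' : arctanh 1 = 0 := by norm_num [arctanh]

lemma arctanh_neg' (x : ℝ) : arctanh (-x) = - arctanh x := by
  unfold arctanh
  rw [show (1 + -x) / (1 - -x) = ((1 + x) / (1 - x))⁻¹ by rw [inv_div]; ring_nf, Real.log_inv]
  ring

lemma arctanh_eq_sub {x : ℝ} (h0 : -1 < x) (h1 : x < 1) :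
    arctanh x = (Real.log (1 + x) - Real.log (1 - x)) / 2 := by
  unfold arctanh
  rw [Real.log_div (by linarith) (by linarith)]

lemma arctanh_nonneg' {x : ℝ} (h0 : 0 ≤ x) (h1 : x ≤ 1) : 0 ≤ arctanh x := by
  rcases eq_or_lt_of_le h1 with rfl | h1'
  · simp [arctanh_one']
  · have h2 : (0:ℝ) < 1 - x := by linarith
    have : (1:ℝ) ≤ (1 + x) / (1 - x) := by
      rw [le_div_iff₀ h2]; linarith
    have := Real.log_nonneg this
    unfold arctanh; linarith

lemma arctanh_nonpos' {x : ℝ} (h0 : -1 ≤ x) (h1 : x ≤ 0) : arctanh x ≤ 0 := by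
  have := arctanh_nonneg' (x := -x) (by linarith) (by linarith)
  rw [arctanh_neg'] at this; linarith

lemma half_lt_arctanh {x : ℝ} (h0 : 0 < x) (h1 : x < 1) : x / 2 < arctanh x := by
  rw [arctanh_eq_sub (by linarith) h1]
  have h2 : Real.log (1 - x) ≤ -x := by
    have := Real.log_le_sub_one_of_pos (x := 1 - x) (by linarith); linarith
  have h3 : 0 < Real.log (1 + x) := Real.log_pos (by linarith)
  linarith

lemma hasDerivAt_log_one_add {x : ℝ} (h : -1 < x) :
    HasDerivAt (fun y : ℝ => Real.log (1 + y)) (1 / (1 + x)) x := by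
  have h1 : HasDerivAt (fun y : ℝ => 1 + y) 1 x := by
    simpa using (hasDerivAt_id x).const_add (1:ℝ)
  have := (Real.hasDerivAt_log (by linarith : (1:ℝ) + x ≠ 0)).comp x h1
  rw [one_div]; exact this.congr_deriv (mul_one _)

lemma hasDerivAt_log_one_sub {x : ℝ} (h : x < 1) :
    HasDerivAt (fun y : ℝ => Real.log (1 - y)) (-(1 / (1 - x))) x := by
  have h1 : HasDerivAt (fun y : ℝ => 1 - y) (-1) x := by
    exact (hasDerivAt_id x).const_sub 1
  have := (Real.hasDerivAt_log (by linarith : (1:ℝ) - x ≠ 0)).comp x h1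
  refine this.congr_deriv ?_
  field_simp

lemma hasDerivAt_arctanh {x : ℝ} (h0 : -1 < x) (h1 : x < 1) :
    HasDerivAt arctanh (1 / (1 - x ^ 2)) x := by
  have hEq : (fun y => (Real.log (1 + y) - Real.log (1 - y)) / 2) =ᶠ[𝓝 x] arctanh := by
    filter_upwards [Ioo_mem_nhds h0 h1] with y hy
    exact (arctanh_eq_sub hy.1 hy.2).symm
  have d := ((hasDerivAt_log_one_add h0).sub (hasDerivAt_log_one_sub h1)).div_const 2
  have d' := d.congr_of_eventuallyEq hEq.symm
  refine d'.congr_deriv ?_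
  have e1 : (1:ℝ) + x ≠ 0 := by linarith
  have e2 : (1:ℝ) - x ≠ 0 := by linarith
  have e3 : (1:ℝ) - x ^ 2 ≠ 0 := by nlinarith
  field_simp
  ring

lemma strictMonoOn_arctanh : StrictMonoOn arctanh (Ioo (-1:ℝ) 1) := by
  apply strictMonoOn_of_deriv_pos (convex_Ioo _ _)
  · intro x hx
    exact (hasDerivAt_arctanh hx.1 hx.2).continuousAt.continuousWithinAt
  · intro x hx
    rw [interior_Ioo] at hx
    rw [(hasDerivAt_arctanh hx.1 hx.2).deriv]
    have : (0:ℝ) < 1 - x ^ 2 := by nlinarith [hx.1, hx.2]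
    positivity

lemma hasDerivAt_bahI {x : ℝ} (h0 : -1 < x) (h1 : x < 1) :
    HasDerivAt bahI (arctanh x) x := by
  have da : HasDerivAt (fun y : ℝ => 1 + y) 1 x := by
    simpa using (hasDerivAt_id x).const_add (1:ℝ)
  have db : HasDerivAt (fun y : ℝ => 1 - y) (-1) x := by
    exact (hasDerivAt_id x).const_sub 1
  have e1 : HasDerivAt (fun y : ℝ => (1 + y) * Real.log (1 + y))
      (Real.log (1 + x) + 1) x := by
    have := da.mul (hasDerivAt_log_one_add h0)
    refine this.congr_deriv ?_
    have hne : (1:ℝ) + x ≠ 0 := by linarith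
    field_simp
  have e2 : HasDerivAt (fun y : ℝ => (1 - y) * Real.log (1 - y))
      (-Real.log (1 - x) - 1) x := by
    have := db.mul (hasDerivAt_log_one_sub h1)
    refine this.congr_deriv ?_
    have hne : (1:ℝ) - x ≠ 0 := by linarith
    field_simp
    ring
  have := (e1.add e2).div_const 2
  have h : HasDerivAt bahI ((Real.log (1 + x) + 1 + (-Real.log (1 - x) - 1)) / 2) x := this
  convert h using 1
  rw [arctanh_eq_sub h0 h1]
  ring

lemma continuous_bahI : Continuous bahI := by
  unfold bahI
  have h1 : Continuous fun x : ℝ => (1 + x) * Real.log (1 + x) :=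
    Real.continuous_mul_log.comp (continuous_const.add continuous_id)
  have h2 : Continuous fun x : ℝ => (1 - x) * Real.log (1 - x) :=
    Real.continuous_mul_log.comp (continuous_const.sub continuous_id)
  exact (h1.add h2).div_const 2

lemma continuous_bahH (β : ℝ) (p : ℕ) : Continuous (bahH β p) :=
  (continuous_const.mul (continuous_pow p)).sub continuous_bahI

lemma hasDerivAt_bahH (β : ℝ) (p : ℕ) {x : ℝ} (h0 : -1 < x) (h1 : x < 1) :
    HasDerivAt (bahH β p) (β * ((p:ℝ) * x ^ (p - 1)) - arctanh x) x :=
  ((hasDerivAt_pow p x).const_mul β).sub (hasDerivAt_bahI h0 h1)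

lemma bahI_zero : bahI 0 = 0 := by simp [bahI]

lemma bahI_one : bahI 1 = Real.log 2 := by norm_num [bahI]

lemma bahI_nonneg {x : ℝ} (h0 : -1 ≤ x) (h1 : x ≤ 1) : 0 ≤ bahI x := by
  have key : ∀ a : ℝ, 0 ≤ a → a - 1 ≤ a * Real.log a := by
    intro a ha
    rcases ha.eq_or_lt with rfl | ha'
    · simp
    · have h := Real.log_le_sub_one_of_pos (inv_pos.2 ha')
      rw [Real.log_inv] at h
      have h2 : 1 - a⁻¹ ≤ Real.log a := by linarith
      calc a - 1 = a * (1 - a⁻¹) := by field_simp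
        _ ≤ a * Real.log a := mul_le_mul_of_nonneg_left h2 ha'.le
  have k1 := key (1 + x) (by linarith)
  have k2 := key (1 - x) (by linarith)
  unfold bahI; linarith

lemma bahI_neg (x : ℝ) : bahI (-x) = bahI x := by
  unfold bahI
  rw [show (1:ℝ) + -x = 1 - x by ring, show (1:ℝ) - -x = 1 + x by ring]
  ring

lemma bahH_zero (β : ℝ) {p : ℕ} (hp : p ≠ 0) : bahH β p 0 = 0 := by
  simp [bahH, bahI_zero, zero_pow hp]

lemma bahH_neg (β : ℝ) {p : ℕ} (hpe : Even p) (x : ℝ) : bahH β p (-x) = bahH β p x := by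
  simp [bahH, hpe.neg_pow, bahI_neg]

lemma etaFn_zero (p : ℕ) : etaFn p 0 = 0 := if_pos rfl

lemma etaFn_of_pos {p : ℕ} (hp : 1 ≤ p) {t : ℝ} (ht : 0 < t) :
    etaFn p t = arctanh t / ((p:ℝ) * t ^ (p - 1)) := by
  rw [etaFn, if_neg ht.ne']
  have h1 : (1 - (p:ℤ)) = -(((p - 1 : ℕ)):ℤ) := by
    have := Nat.cast_sub (R := ℤ) hp
    omega
  rw [h1, zpow_neg, zpow_natCast]
  have hp0 : ((p:ℝ)) ≠ 0 := by positivity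
  have htp : t ^ (p - 1) ≠ 0 := by positivity
  field_simp
  try ring

lemma lt_etaFn_iff {p : ℕ} (hp : 1 ≤ p) {β t : ℝ} (ht : 0 < t) :
    β < etaFn p t ↔ β * ((p:ℝ) * t ^ (p - 1)) < arctanh t := by
  have hp0 : (0:ℝ) < (p:ℝ) := by exact_mod_cast hp
  rw [etaFn_of_pos hp ht, lt_div_iff₀ (by positivity)]

lemma etaFn_neg_even {p : ℕ} (hpe : Even p) (t : ℝ) : etaFn p (-t) = etaFn p t := by
  rcases eq_or_ne t 0 with rfl | ht
  · simp
  · rw [etaFn, etaFn, if_neg (neg_ne_zero.2 ht), if_neg ht]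
    have hodd : Odd (1 - (p:ℤ)) := by
      rcases hpe with ⟨k, hk⟩
      exact ⟨-k, by omega⟩
    rw [hodd.neg_zpow, arctanh_neg']
    ring

noncomputable def gFn (p : ℕ) (t : ℝ) : ℝ := t / (1 - t ^ 2) - ((p:ℝ) - 1) * arctanh t

lemma gFn_zero (p : ℕ) : gFn p 0 = 0 := by simp [gFn, arctanh_zero']

lemma hasDerivAt_gFn (p : ℕ) {t : ℝ} (h0 : -1 < t) (h1 : t < 1) :
    HasDerivAt (gFn p) (((p:ℝ) * t ^ 2 - ((p:ℝ) - 2)) / (1 - t ^ 2) ^ 2) t := by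
  have ht2 : (1:ℝ) - t ^ 2 ≠ 0 := by nlinarith
  have d1 : HasDerivAt (fun y : ℝ => y / (1 - y ^ 2)) ((1 + t ^ 2) / (1 - t ^ 2) ^ 2) t := by
    have dden : HasDerivAt (fun y : ℝ => 1 - y ^ 2) (-(2 * t)) t := by
      simpa using ((hasDerivAt_pow 2 t).const_sub 1)
    have := (hasDerivAt_id t).div dden ht2
    refine this.congr_deriv ?_
    field_simp
    simp only [id]; ring
  have d2 := (hasDerivAt_arctanh h0 h1).const_mul ((p:ℝ) - 1)
  have := d1.sub d2
  refine this.congr_deriv ?_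
  field_simp
  ring

lemma gFn_neg_of_le_sqrt {p : ℕ} (hp : 3 ≤ p) {t : ℝ} (h0 : 0 < t)
    (h1 : t ≤ Real.sqrt (((p:ℝ) - 2) / p)) : gFn p t < 0 := by
  have hpR : (3:ℝ) ≤ (p:ℝ) := by exact_mod_cast hp
  have hpRpos : (0:ℝ) < (p:ℝ) := by linarith
  set r := Real.sqrt (((p:ℝ) - 2) / p) with hr
  have hrarg : (0:ℝ) < ((p:ℝ) - 2) / p := div_pos (by linarith) hpRpos
  have hr0 : 0 < r := Real.sqrt_pos.2 hrarg
  have hr2 : r ^ 2 = ((p:ℝ) - 2) / p := Real.sq_sqrt hrarg.le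
  have hr1 : r < 1 := by
    rw [hr, show (1:ℝ) = Real.sqrt 1 by simp]
    exact Real.sqrt_lt_sqrt hrarg.le (by rw [div_lt_one hpRpos]; linarith)
  have hanti : StrictAntiOn (gFn p) (Icc 0 r) := by
    apply strictAntiOn_of_deriv_neg (convex_Icc _ _)
    · intro x hx
      exact (hasDerivAt_gFn p (by linarith [hx.1] : (-1:ℝ) < x)
        (lt_of_le_of_lt hx.2 hr1)).continuousAt.continuousWithinAt
    · intro x hx
      rw [interior_Icc] at hx
      have hx1 : x < 1 := hx.2.trans hr1
      rw [(hasDerivAt_gFn p (by linarith [hx.1]) hx1).deriv]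
      have hx2 : x ^ 2 < r ^ 2 := by nlinarith [hx.1, hx.2]
      rw [hr2] at hx2
      have hnum : (p:ℝ) * x ^ 2 - ((p:ℝ) - 2) < 0 := by
        have := (lt_div_iff₀ hpRpos).1 hx2
        nlinarith
      have hden : (0:ℝ) < (1 - x ^ 2) ^ 2 := by
        have h1x : (0:ℝ) < 1 - x ^ 2 := by nlinarith [hx.1]
        positivity
      exact div_neg_of_neg_of_pos hnum hden
  have := hanti (show (0:ℝ) ∈ Icc 0 r from ⟨le_refl 0, hr0.le⟩)
    (show t ∈ Icc 0 r from ⟨h0.le, h1⟩) h0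
  rwa [gFn_zero] at this

lemma gFn_strictMono {p : ℕ} (hp : 3 ≤ p) :
    StrictMonoOn (gFn p) (Ico (Real.sqrt (((p:ℝ) - 2) / p)) 1) := by
  have hpR : (3:ℝ) ≤ (p:ℝ) := by exact_mod_cast hp
  have hpRpos : (0:ℝ) < (p:ℝ) := by linarith
  have hrarg : (0:ℝ) < ((p:ℝ) - 2) / p := div_pos (by linarith) hpRpos
  have hr0 : 0 < Real.sqrt (((p:ℝ) - 2) / p) := Real.sqrt_pos.2 hrarg
  have hr2 : Real.sqrt (((p:ℝ) - 2) / p) ^ 2 = ((p:ℝ) - 2) / p := Real.sq_sqrt hrarg.le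
  apply strictMonoOn_of_deriv_pos (convex_Ico _ _)
  · intro x hx
    exact (hasDerivAt_gFn p (by linarith [hr0, hx.1] : (-1:ℝ) < x)
      hx.2).continuousAt.continuousWithinAt
  · intro x hx
    rw [interior_Ico] at hx
    have hx0 : 0 < x := hr0.trans hx.1
    rw [(hasDerivAt_gFn p (by linarith) hx.2).deriv]
    have hx2 : Real.sqrt (((p:ℝ) - 2) / p) ^ 2 < x ^ 2 := by nlinarith [hx.1, hr0]
    rw [hr2] at hx2
    have hnum : (0:ℝ) < (p:ℝ) * x ^ 2 - ((p:ℝ) - 2) := by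
      have := (div_lt_iff₀ hpRpos).1 hx2
      nlinarith
    have hden : (0:ℝ) < (1 - x ^ 2) ^ 2 := by
      have h1x : (0:ℝ) < 1 - x ^ 2 := by nlinarith [hx.2, hx0]
      positivity
    exact div_pos hnum hden

lemma hasDerivAt_etaFn {p : ℕ} (hp : 3 ≤ p) {t : ℝ} (h0 : 0 < t) (h1 : t < 1) :
    HasDerivAt (etaFn p) ((p:ℝ)⁻¹ * t ^ (-(p:ℤ)) * gFn p t) t := by
  have hEq : (fun s : ℝ => (p:ℝ)⁻¹ * (s ^ (1 - (p:ℤ)) * arctanh s)) =ᶠ[𝓝 t] etaFn p := by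
    filter_upwards [eventually_ne_nhds h0.ne'] with s hs
    rw [etaFn, if_neg hs]
    ring
  have dz : HasDerivAt (fun s : ℝ => s ^ (1 - (p:ℤ)))
      (((1 - (p:ℤ)):ℤ) * t ^ (1 - (p:ℤ) - 1)) t := hasDerivAt_zpow _ _ (Or.inl h0.ne')
  have da := hasDerivAt_arctanh (by linarith) h1
  have dm := (dz.mul da).const_mul ((p:ℝ)⁻¹)
  have key := dm.congr_of_eventuallyEq hEq.symm
  refine key.congr_deriv ?_
  have e1 : t ^ (1 - (p:ℤ) - 1) = t ^ (-(p:ℤ)) := by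
    rw [show (1 - (p:ℤ) - 1) = -(p:ℤ) by ring]
  have e2 : t ^ (1 - (p:ℤ)) = t ^ (-(p:ℤ)) * t := by
    rw [show (1 - (p:ℤ)) = -(p:ℤ) + 1 by ring, zpow_add₀ h0.ne', zpow_one]
  rw [e1, e2]
  unfold gFn
  push_cast
  ring


set_option maxHeartbeats 1600000 in
/-- For `p ≥ 3` and `β > β₀ > β*(p)`, with `m = m_*(β,p)` the positive global maximizer
of `H_{β,p}` on `[−1,1]`:
`sup_{x ∈ η_p⁻¹((β,∞))} H_{β₀,p}(x) = max { sup_{x ∈ (m, 1]} H_{β₀,p}(x), 0 }`. -/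
theorem statement6 (p : ℕ) (hp : 3 ≤ p) (β β₀ : ℝ) (h0 : betaStar p < β₀) (h1 : β₀ < β)
    (m : ℝ) (hm0 : 0 < m) (hm1 : m ∈ Set.Icc (-1 : ℝ) 1)
    (hmax : IsMaxOn (bahH β p) (Set.Icc (-1 : ℝ) 1) m) :
    sSup (bahH β₀ p '' {t ∈ Set.Icc (-1 : ℝ) 1 | β < etaFn p t})
      = max (sSup (bahH β₀ p '' Set.Ioc m 1)) 0 := by
  have hmax' : ∀ x ∈ Icc (-1:ℝ) 1, bahH β p x ≤ bahH β p m := fun x hx => hmax hx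
  have hp0 : 0 < p := by omega
  have hp1 : 1 ≤ p := by omega
  have hpR : (3:ℝ) ≤ (p:ℝ) := by exact_mod_cast hp
  have hpRpos : (0:ℝ) < (p:ℝ) := by linarith
  -- β₀ and β are positive
  have hbS : 0 ≤ betaStar p := by
    have hbdd_img : ∀ γ : ℝ, BddAbove (bahH γ p '' Icc (-1:ℝ) 1) := fun γ =>
      (isCompact_Icc.image (continuous_bahH γ p)).bddAbove
    have hmem : (0:ℝ) ∈ {γ : ℝ | 0 ≤ γ ∧ sSup (bahH γ p '' Set.Icc (-1 : ℝ) 1) = 0} := by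
      refine ⟨le_refl 0, le_antisymm ?_ ?_⟩
      · apply csSup_le ⟨bahH 0 p 0, mem_image_of_mem _ (by norm_num)⟩
        rintro y ⟨x, hx, rfl⟩
        have := bahI_nonneg hx.1 hx.2
        simp only [bahH, zero_mul]
        linarith
      · refine le_csSup (hbdd_img 0) ⟨0, by norm_num, ?_⟩
        rw [bahH_zero 0 hp0.ne']
    have hbdd : BddAbove {γ : ℝ | 0 ≤ γ ∧ sSup (bahH γ p '' Set.Icc (-1 : ℝ) 1) = 0} := by
      refine ⟨Real.log 2, ?_⟩
      rintro γ ⟨hγ0, hγsup⟩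
      have him : bahH γ p 1 ∈ bahH γ p '' Icc (-1:ℝ) 1 :=
        mem_image_of_mem _ (by norm_num)
      have hb : bahH γ p 1 ≤ 0 := hγsup ▸ le_csSup (hbdd_img γ) him
      have he : bahH γ p 1 = γ - Real.log 2 := by simp [bahH, bahI_one]
      rw [he] at hb
      linarith
    exact le_csSup hbdd hmem
  have hβ0pos : 0 < β₀ := hbS.trans_lt h0
  have hβpos : 0 < β := hβ0pos.trans h1
  -- m < 1
  have hm1' : m < 1 := by
    rcases lt_or_eq_of_le hm1.2 with h | hmeq
    · exact h
    exfalso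
    set K : ℝ := β * p with hK
    have hKpos : 0 < K := mul_pos hβpos hpRpos
    set x₀ : ℝ := 1 - Real.exp (-(2 * K + 2)) with hx₀
    have hexpos := Real.exp_pos (-(2 * K + 2))
    have hex : Real.exp (-(2 * K + 2)) < 1 := by
      rw [Real.exp_lt_one_iff]; linarith
    have hx₀0 : 0 < x₀ := by rw [hx₀]; linarith
    have hx₀1 : x₀ < 1 := by rw [hx₀]; linarith
    have hat : K + 1 ≤ arctanh x₀ := by
      have h1x : 1 - x₀ = Real.exp (-(2 * K + 2)) := by rw [hx₀]; ring
      have hquot : Real.exp (2 * K + 2) ≤ (1 + x₀) / (1 - x₀) := by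
        rw [h1x, le_div_iff₀ (Real.exp_pos _), ← Real.exp_add,
          show (2 * K + 2) + (-(2 * K + 2)) = 0 by ring, Real.exp_zero]
        linarith
      have hlog := Real.log_le_log (Real.exp_pos _) hquot
      rw [Real.log_exp] at hlog
      unfold arctanh
      linarith
    have hIgap : arctanh x₀ * (1 - x₀) ≤ bahI 1 - bahI x₀ := by
      have hmono : MonotoneOn (fun y => bahI y - arctanh x₀ * y) (Icc x₀ 1) := by
        apply monotoneOn_of_deriv_nonneg (convex_Icc _ _)
        · exact (continuous_bahI.sub (continuous_const.mul continuous_id)).continuousOn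
        · intro y hy
          rw [interior_Icc] at hy
          exact ((hasDerivAt_bahI (by linarith [hy.1, hx₀0]) hy.2).sub
            ((hasDerivAt_id y).const_mul (arctanh x₀))).differentiableAt.differentiableWithinAt
        · intro y hy
          rw [interior_Icc] at hy
          have hd : HasDerivAt (fun y => bahI y - arctanh x₀ * y) (arctanh y - arctanh x₀ * 1) y :=
            (hasDerivAt_bahI (by linarith [hy.1, hx₀0]) hy.2).sub
              ((hasDerivAt_id y).const_mul (arctanh x₀))
          rw [hd.deriv]
          have : arctanh x₀ ≤ arctanh y :=
            (strictMonoOn_arctanh ⟨by linarith, hx₀1⟩ ⟨by linarith [hy.1, hx₀0], hy.2⟩ hy.1).le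
          linarith
      have := hmono (show x₀ ∈ Icc x₀ 1 from ⟨le_refl _, hx₀1.le⟩)
        (show (1:ℝ) ∈ Icc x₀ 1 from ⟨hx₀1.le, le_refl _⟩) hx₀1.le
      simp only at this
      linarith
    have hpow : 1 - x₀ ^ p ≤ (p:ℝ) * (1 - x₀) := by
      have hb := one_add_mul_le_pow (a := x₀ - 1) (by linarith) p
      rw [show (1:ℝ) + (x₀ - 1) = x₀ by ring] at hb
      linarith
    have hH1 : bahH β p 1 = β - Real.log 2 := by simp [bahH, bahI_one]
    have hle := hmax' x₀ ⟨by linarith, hx₀1.le⟩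
    rw [hmeq] at hle
    have hexpand : bahH β p 1 - bahH β p x₀ = β * (1 - x₀ ^ p) - (bahI 1 - bahI x₀) := by
      simp only [bahH, one_pow]; ring
    have hb1 : β * (1 - x₀ ^ p) ≤ K * (1 - x₀) := by
      have := mul_le_mul_of_nonneg_left hpow hβpos.le
      rw [hK]; nlinarith
    have hb2 : (K + 1) * (1 - x₀) ≤ arctanh x₀ * (1 - x₀) :=
      mul_le_mul_of_nonneg_right hat (by linarith)
    nlinarith [hle, hexpand, hb1, hb2, hIgap, hx₀1]
  -- critical point equation
  have hm_in1 : (-1:ℝ) < m := by linarith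
  have hlocal : IsLocalMax (bahH β p) m :=
    hmax.isLocalMax (Icc_mem_nhds (by linarith) (by linarith))
  have hcrit0 := hlocal.hasDerivAt_eq_zero (hasDerivAt_bahH β p hm_in1 hm1')
  have hcrit : arctanh m = β * ((p:ℝ) * m ^ (p - 1)) := by linarith [hcrit0]
  have hetam : etaFn p m = β := by
    rw [etaFn_of_pos hp1 hm0, hcrit]
    field_simp
  -- 0 ≤ gFn p m  (second-order condition)
  have hgm : 0 ≤ gFn p m := by
    by_contra hneg
    push_neg at hneg
    set φ : ℝ → ℝ := fun t => β * ((p:ℝ) * t ^ (p - 1)) - arctanh t with hφ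
    have hφm : φ m = 0 := by rw [hφ]; simp only; linarith [hcrit]
    have hm2 : (0:ℝ) < 1 - m ^ 2 := by nlinarith
    have hdφ : HasDerivAt φ
        (β * ((p:ℝ) * (((p - 1 : ℕ):ℝ) * m ^ (p - 2))) - 1 / (1 - m ^ 2)) m := by
      have hpp : HasDerivAt (fun t : ℝ => β * ((p:ℝ) * t ^ (p - 1)))
          (β * ((p:ℝ) * (((p - 1 : ℕ):ℝ) * m ^ (p - 1 - 1)))) m :=
        (((hasDerivAt_pow (p - 1) m).const_mul ((p:ℝ))).const_mul β)
      rw [show p - 1 - 1 = p - 2 by omega] at hpp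
      exact hpp.sub (hasDerivAt_arctanh hm_in1 hm1')
    have hcast : ((p - 1 : ℕ):ℝ) = (p:ℝ) - 1 := by
      rw [Nat.cast_sub hp1]; norm_num
    have hcpos : 0 < β * ((p:ℝ) * (((p - 1 : ℕ):ℝ) * m ^ (p - 2))) - 1 / (1 - m ^ 2) := by
      have hgm2 : m / (1 - m ^ 2) < ((p:ℝ) - 1) * arctanh m := by
        have := hneg; unfold gFn at this; linarith
      rw [hcrit] at hgm2
      have hmp : m ^ (p - 1) = m ^ (p - 2) * m := by
        rw [← pow_succ]
        congr 1
        omega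
      have h3 : (1 / (1 - m ^ 2)) * m < (β * (p:ℝ) * (((p:ℝ) - 1) * m ^ (p - 2))) * m := by
        calc (1 / (1 - m ^ 2)) * m = m / (1 - m ^ 2) := by ring
          _ < ((p:ℝ) - 1) * (β * ((p:ℝ) * m ^ (p - 1))) := hgm2
          _ = (β * (p:ℝ) * (((p:ℝ) - 1) * m ^ (p - 2))) * m := by rw [hmp]; ring
      have h4 := (mul_lt_mul_iff_of_pos_right hm0).1 h3
      rw [hcast]
      nlinarith [h4]
    have hslope := hasDerivAt_iff_tendsto_slope.1 hdφ
    have hev : ∀ᶠ t in 𝓝[<] m, 0 < slope φ m t :=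
      (hslope.eventually (eventually_gt_nhds hcpos)).filter_mono
        (nhdsWithin_mono _ (fun x hx => ne_of_lt hx))
    have hev2 : ∀ᶠ t in 𝓝[<] m, φ t < 0 := by
      filter_upwards [hev, self_mem_nhdsWithin] with t ht htm
      rw [slope_def_field, hφm, sub_zero] at ht
      by_contra hc
      push_neg at hc
      have : φ t / (t - m) ≤ 0 :=
        div_nonpos_iff.2 (Or.inl ⟨hc, by simp only [mem_Iio] at htm; linarith⟩)
      linarith
    rcases mem_nhdsLT_iff_exists_Ioo_subset.1 hev2 with ⟨l, hl, hsub⟩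
    simp only [mem_Iio] at hl
    have hMlt : max l 0 < m := max_lt hl hm0
    have hMl : l ≤ max l 0 := le_max_left l 0
    have hM0 : (0:ℝ) ≤ max l 0 := le_max_right l 0
    set b : ℝ := (max l 0 + m) / 2 with hb
    have hbl : l < b := by rw [hb]; linarith
    have hb0 : 0 < b := by rw [hb]; linarith
    have hbm : b < m := by rw [hb]; linarith
    have hanti : StrictAntiOn (bahH β p) (Icc b m) := by
      apply strictAntiOn_of_deriv_neg (convex_Icc _ _) ((continuous_bahH β p).continuousOn)
      intro x hx
      rw [interior_Icc] at hx
      have hx1 : x < 1 := hx.2.trans hm1'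
      rw [(hasDerivAt_bahH β p (by linarith [hb0, hx.1]) hx1).deriv]
      have hφx : φ x < 0 := hsub ⟨hbl.trans hx.1, hx.2⟩
      rw [hφ] at hφx
      exact hφx
    have hlt : bahH β p m < bahH β p b :=
      hanti ⟨le_refl b, hbm.le⟩ ⟨hbm.le, le_refl m⟩ hbm
    have := hmax' b ⟨by linarith, by linarith⟩
    linarith
  -- r < m
  have hrarg : (0:ℝ) < ((p:ℝ) - 2) / p := div_pos (by linarith) hpRpos
  have hr0 : 0 < Real.sqrt (((p:ℝ) - 2) / p) := Real.sqrt_pos.2 hrarg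
  have hmr : Real.sqrt (((p:ℝ) - 2) / p) < m := by
    by_contra hc
    push_neg at hc
    exact absurd hgm (not_le.2 (gFn_neg_of_le_sqrt hp hm0 hc))
  -- (B): β < etaFn p t for t ∈ (m, 1)
  have hB : ∀ t, m < t → t < 1 → β < etaFn p t := by
    intro t ht1 ht2
    have hmono : StrictMonoOn (etaFn p) (Ico m 1) := by
      apply strictMonoOn_of_deriv_pos (convex_Ico _ _)
      · intro x hx
        exact (hasDerivAt_etaFn hp (hm0.trans_le hx.1) hx.2).continuousAt.continuousWithinAt
      · intro x hx
        rw [interior_Ico] at hx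
        have hx0 : 0 < x := hm0.trans hx.1
        rw [(hasDerivAt_etaFn hp hx0 hx.2).deriv]
        have hgx : 0 < gFn p x :=
          hgm.trans_lt (gFn_strictMono hp ⟨hmr.le, hm1'⟩ ⟨(hmr.trans hx.1).le, hx.2⟩ hx.1)
        have h2 : (0:ℝ) < x ^ (-(p:ℤ)) := zpow_pos hx0 _
        have h3 : (0:ℝ) < ((p:ℝ))⁻¹ := by positivity
        exact mul_pos (mul_pos h3 h2) hgx
    have := hmono ⟨le_refl m, hm1'⟩ ⟨ht1.le, ht2⟩ ht1
    rwa [hetam] at this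
  -- (A): bahH β₀ p t < 0 for t ∈ (0, m] with β < etaFn p t
  have hA : ∀ t, 0 < t → t ≤ m → β < etaFn p t → bahH β₀ p t < 0 := by
    intro t ht0 htm hηt
    have htm' : t < m := by
      rcases lt_or_eq_of_le htm with h | h
      · exact h
      · rw [h, hetam] at hηt; exact absurd hηt (lt_irrefl β)
    have ht1 : t < 1 := htm'.trans hm1'
    have hgneg : ∀ u, 0 < u → u ≤ t → gFn p u < 0 := by
      intro u hu0 hut
      by_contra hcg
      push_neg at hcg
      have hur : Real.sqrt (((p:ℝ) - 2) / p) < u := by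
        by_contra hru
        push_neg at hru
        exact absurd hcg (not_le.2 (gFn_neg_of_le_sqrt hp hu0 hru))
      have hu1 : u < 1 := lt_of_le_of_lt hut ht1
      have hmonoU : StrictMonoOn (etaFn p) (Ico u 1) := by
        apply strictMonoOn_of_deriv_pos (convex_Ico _ _)
        · intro x hx
          exact (hasDerivAt_etaFn hp (hu0.trans_le hx.1) hx.2).continuousAt.continuousWithinAt
        · intro x hx
          rw [interior_Ico] at hx
          have hx0 : 0 < x := hu0.trans hx.1
          rw [(hasDerivAt_etaFn hp hx0 hx.2).deriv]
          have hgx : 0 < gFn p x :=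
            hcg.trans_lt (gFn_strictMono hp ⟨hur.le, hu1⟩ ⟨(hur.trans hx.1).le, hx.2⟩ hx.1)
          have h2 : (0:ℝ) < x ^ (-(p:ℤ)) := zpow_pos hx0 _
          have h3 : (0:ℝ) < ((p:ℝ))⁻¹ := by positivity
          exact mul_pos (mul_pos h3 h2) hgx
      have hlt : etaFn p t < etaFn p m :=
        hmonoU ⟨hut, ht1⟩ ⟨hut.trans htm'.le, hm1'⟩ htm'
      rw [hetam] at hlt
      linarith
    have hantiEta : StrictAntiOn (etaFn p) (Ioc 0 t) := by
      apply strictAntiOn_of_deriv_neg (convex_Ioc _ _)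
      · intro x hx
        exact (hasDerivAt_etaFn hp hx.1 (lt_of_le_of_lt hx.2 ht1)).continuousAt.continuousWithinAt
      · intro x hx
        rw [interior_Ioc] at hx
        rw [(hasDerivAt_etaFn hp hx.1 (hx.2.trans ht1)).deriv]
        have hgx : gFn p x < 0 := hgneg x hx.1 hx.2.le
        have h2 : (0:ℝ) < (p:ℝ)⁻¹ * x ^ (-(p:ℤ)) := by
          have h2a : (0:ℝ) < x ^ (-(p:ℤ)) := zpow_pos hx.1 _
          have h3 : (0:ℝ) < ((p:ℝ))⁻¹ := by positivity
          exact mul_pos h3 h2a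
        exact mul_neg_of_pos_of_neg h2 hgx
    have hsneg : ∀ s, 0 < s → s < t → β < etaFn p s := fun s hs0 hst =>
      hηt.trans (hantiEta ⟨hs0, hst.le⟩ ⟨ht0, le_refl t⟩ hst)
    have hantiH : StrictAntiOn (bahH β p) (Icc 0 t) := by
      apply strictAntiOn_of_deriv_neg (convex_Icc _ _) ((continuous_bahH β p).continuousOn)
      intro x hx
      rw [interior_Icc] at hx
      have hx1 : x < 1 := hx.2.trans ht1
      rw [(hasDerivAt_bahH β p (by linarith [hx.1]) hx1).deriv]
      have := (lt_etaFn_iff hp1 hx.1).1 (hsneg x hx.1 hx.2)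
      linarith
    have hHt : bahH β p t < 0 := by
      have := hantiH ⟨le_refl 0, ht0.le⟩ ⟨ht0.le, le_refl t⟩ ht0
      rwa [bahH_zero β hp0.ne'] at this
    have hlt2 : β₀ * t ^ p < β * t ^ p := mul_lt_mul_of_pos_right h1 (pow_pos ht0 p)
    simp only [bahH] at hHt ⊢
    linarith
  -- set-level bookkeeping
  have hbdd_Icc : BddAbove (bahH β₀ p '' Icc (-1:ℝ) 1) :=
    (isCompact_Icc.image (continuous_bahH β₀ p)).bddAbove
  have hSsub : {t ∈ Icc (-1:ℝ) 1 | β < etaFn p t} ⊆ Icc (-1:ℝ) 1 := fun t ht => ht.1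
  have hbddS : BddAbove (bahH β₀ p '' {t ∈ Icc (-1:ℝ) 1 | β < etaFn p t}) :=
    hbdd_Icc.mono (image_mono hSsub)
  have hIocsub : Ioc m 1 ⊆ Icc (-1:ℝ) 1 := fun x hx => ⟨by linarith [hx.1], hx.2⟩
  have hbddI : BddAbove (bahH β₀ p '' Ioc m 1) := hbdd_Icc.mono (image_mono hIocsub)
  have hmid : (m + 1) / 2 ∈ Ioo m 1 := ⟨by linarith, by linarith⟩
  have hIooS : Ioo m 1 ⊆ {t ∈ Icc (-1:ℝ) 1 | β < etaFn p t} := fun x hx =>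
    ⟨⟨by linarith [hx.1], hx.2.le⟩, hB x hx.1 hx.2⟩
  have hSne : (bahH β₀ p '' {t ∈ Icc (-1:ℝ) 1 | β < etaFn p t}).Nonempty :=
    ⟨_, mem_image_of_mem _ (hIooS hmid)⟩
  have hIone : (bahH β₀ p '' Ioc m 1).Nonempty :=
    ⟨_, mem_image_of_mem _ (show (m+1)/2 ∈ Ioc m 1 from ⟨hmid.1, hmid.2.le⟩)⟩
  -- 0 ≤ LHS
  have hl0 : 0 ≤ sSup (bahH β₀ p '' {t ∈ Icc (-1:ℝ) 1 | β < etaFn p t}) := by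
    have hε : ∀ ε : ℝ, 0 < ε → ∃ t ∈ {t ∈ Icc (-1:ℝ) 1 | β < etaFn p t},
        -ε < bahH β₀ p t := by
      intro ε hε
      rcases Metric.continuousAt_iff.1 ((continuous_bahH β₀ p).continuousAt (x := 0)) ε hε with ⟨δ, hδ0, hδ⟩
      have hβp2 : (0:ℝ) < 2 * β * p := by positivity
      set t : ℝ := min (δ / 2) (min (1 / 2) (1 / (2 * β * p))) with htdef
      have ht0 : 0 < t := lt_min (by linarith) (lt_min (by norm_num) (by positivity))
      have ht_half : t ≤ 1 / 2 := le_trans (min_le_right _ _) (min_le_left _ _)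
      have ht1 : t < 1 := by linarith
      have htβ : t ≤ 1 / (2 * β * p) := le_trans (min_le_right _ _) (min_le_right _ _)
      have htδ : t ≤ δ / 2 := min_le_left _ _
      have htS : t ∈ {t ∈ Icc (-1:ℝ) 1 | β < etaFn p t} := by
        refine ⟨⟨by linarith, ht1.le⟩, ?_⟩
        rw [lt_etaFn_iff hp1 ht0]
        have ha : t / 2 < arctanh t := half_lt_arctanh ht0 ht1
        have h2 : t ^ (p - 1) = t ^ (p - 2) * t := by
          rw [← pow_succ]; congr 1; omega
        have h3 : t ^ (p - 2) ≤ t := by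
          have := pow_le_pow_of_le_one ht0.le ht1.le (show 1 ≤ p - 2 by omega)
          simpa using this
        have h4 : β * (p:ℝ) * t ≤ 1 / 2 := by
          have := (le_div_iff₀ hβp2).1 htβ
          nlinarith
        have e1 : β * ((p:ℝ) * t ^ (p - 1)) = (β * (p:ℝ) * t ^ (p - 2)) * t := by
          rw [h2]; ring
        have e2 : β * (p:ℝ) * t ^ (p - 2) ≤ β * (p:ℝ) * t :=
          mul_le_mul_of_nonneg_left h3 (by positivity)
        have e3 : (β * (p:ℝ) * t ^ (p - 2)) * t ≤ (β * (p:ℝ) * t) * t :=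
          mul_le_mul_of_nonneg_right e2 ht0.le
        have e4 : (β * (p:ℝ) * t) * t ≤ (1 / 2) * t := mul_le_mul_of_nonneg_right h4 ht0.le
        linarith
      refine ⟨t, htS, ?_⟩
      have hdist : dist t 0 < δ := by
        rw [Real.dist_eq, sub_zero, abs_of_pos ht0]; linarith
      have h5 := hδ hdist
      rw [Real.dist_eq, bahH_zero β₀ hp0.ne', sub_zero] at h5
      have := abs_lt.1 h5
      linarith [this.1]
    by_contra hL
    push_neg at hL
    rcases hε (-(sSup (bahH β₀ p '' {t ∈ Icc (-1:ℝ) 1 | β < etaFn p t}))) (by linarith)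
      with ⟨t, htS, ht⟩
    have := le_csSup hbddS (mem_image_of_mem (bahH β₀ p) htS)
    linarith
  -- LHS ≤ RHS
  refine le_antisymm ?_ ?_
  · apply csSup_le hSne
    rintro y ⟨t, htS, rfl⟩
    obtain ⟨⟨htl, htr⟩, htη⟩ := htS
    have key : ∀ s, 0 < s → s ≤ 1 → β < etaFn p s →
        bahH β₀ p s ≤ max (sSup (bahH β₀ p '' Ioc m 1)) 0 := by
      intro s hs0 hs1 hsη
      rcases le_or_gt s m with hsm | hms
      · exact ((hA s hs0 hsm hsη).le).trans (le_max_right _ _)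
      · exact (le_csSup hbddI (mem_image_of_mem _ ⟨hms, hs1⟩)).trans (le_max_left _ _)
    rcases lt_trichotomy t 0 with htneg | htz | htpos
    · rcases Nat.even_or_odd p with hpe | hpo
      · have hη' : β < etaFn p (-t) := by rwa [etaFn_neg_even hpe]
        have := key (-t) (by linarith) (by linarith) hη'
        rwa [bahH_neg β₀ hpe t] at this
      · exfalso
        have hle0 : etaFn p t ≤ 0 := by
          rw [etaFn, if_neg (ne_of_lt htneg)]
          have h2 : (0:ℝ) ≤ t ^ (1 - (p:ℤ)) := by
            have heven : Even (1 - (p:ℤ)) := by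
              rcases hpo with ⟨k, hk⟩
              exact ⟨-k, by omega⟩
            exact heven.zpow_nonneg t
          have h3 : arctanh t ≤ 0 := arctanh_nonpos' htl htneg.le
          have h4 : (0:ℝ) ≤ (p:ℝ)⁻¹ := by positivity
          exact mul_nonpos_of_nonneg_of_nonpos (mul_nonneg h4 h2) h3
        linarith
    · exfalso
      rw [htz, etaFn_zero] at htη
      linarith
    · exact key t htpos htr htη
  · apply max_le _ hl0
    apply csSup_le hIone
    rintro y ⟨x, hx, rfl⟩
    rcases lt_or_eq_of_le hx.2 with hx1 | hx1
    · exact le_csSup hbddS (mem_image_of_mem _ (hIooS ⟨hx.1, hx1⟩))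
    · subst hx1
      have hne : (𝓝[Ioo m (1:ℝ)] (1:ℝ)).NeBot := by
        rw [← mem_closure_iff_nhdsWithin_neBot, closure_Ioo (ne_of_lt hm1')]
        exact ⟨hm1'.le, le_refl (1:ℝ)⟩
      have hten : Tendsto (bahH β₀ p) (𝓝[Ioo m (1:ℝ)] (1:ℝ)) (𝓝 (bahH β₀ p 1)) :=
        (continuous_bahH β₀ p).continuousWithinAt
      refine le_of_tendsto hten ?_
      filter_upwards [self_mem_nhdsWithin] with s hs
      exact le_csSup hbddS (mem_image_of_mem _ (hIooS hs))
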